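/- arXiv:2403.19515 — 6 statements merged into one kernel-verified Lean document; each statement's English description precedes it below -/
import Mathlib

section
/- Let C ⊆ ℝ^p be an open convex set and let (f_n) be a sequence of convex functions C → ℝ such that lim f_n(x) exists (in ℝ) for all x in a dense subset C₀ of C. Then (f_n) converges pointwise on all of C, the limit function f is finite and convex on C, and f_n → f uniformly on every compact subset of C. -/
open Filter Topology Metric Set

/-- pointwise convergence of convex functions on a dense subset of an open
convex set implies pointwise convergence everywhere, the limit is convex, and convergence
is uniform on compact subsets. -/
theorem stmt0 (p : ℕ) (C C₀ : Set (EuclideanSpace ℝ (Fin p)))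
    (f : ℕ → EuclideanSpace ℝ (Fin p) → ℝ)
    (hCopen : IsOpen C) (hCconv : Convex ℝ C)
    (hconv : ∀ n, ConvexOn ℝ C (f n))
    (hC₀C : C₀ ⊆ C) (hdense : C ⊆ closure C₀)
    (hlim : ∀ x ∈ C₀, ∃ l : ℝ, Tendsto (fun n => f n x) atTop (𝓝 l)) :
    ∃ g : EuclideanSpace ℝ (Fin p) → ℝ,
      ConvexOn ℝ C g ∧
      (∀ x ∈ C, Tendsto (fun n => f n x) atTop (𝓝 (g x))) ∧
      (∀ K : Set (EuclideanSpace ℝ (Fin p)), K ⊆ C → IsCompact K →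
        TendstoUniformlyOn f g atTop K) := by
  classical
  -- The set of points where the sequence is bounded above
  set D : Set (EuclideanSpace ℝ (Fin p)) := {x | x ∈ C ∧ BddAbove (Set.range fun n => f n x)} with hDdef
  have hDC : D ⊆ C := fun x hx => hx.1
  have hC₀D : C₀ ⊆ D := fun x hx =>
    ⟨hC₀C hx, ((hlim x hx).choose_spec).bddAbove_range⟩
  have hDconv : Convex ℝ D := by
    intro x hx y hy a b ha hb hab
    refine ⟨hCconv hx.1 hy.1 ha hb hab, ?_⟩
    obtain ⟨Mx, hMx⟩ := hx.2
    obtain ⟨My, hMy⟩ := hy.2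
    refine ⟨a * Mx + b * My, ?_⟩
    rintro z ⟨n, rfl⟩
    have h1 := (hconv n).2 hx.1 hy.1 ha hb hab
    have h2 : f n x ≤ Mx := hMx (Set.mem_range_self n)
    have h3 : f n y ≤ My := hMy (Set.mem_range_self n)
    simp only [smul_eq_mul] at h1
    calc f n (a • x + b • y) ≤ a * f n x + b * f n y := h1
      _ ≤ a * Mx + b * My := by
          gcongr <;> assumption
  -- Every point of C is a point of boundedness
  have hCD : C ⊆ D := by
    intro x hx
    have hne : C.Nonempty := ⟨x, hx⟩
    have hclos : C ⊆ closure D := hdense.trans (closure_mono hC₀D)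
    have hspanD : affineSpan ℝ D = ⊤ := by
      have h1 : IsClosed ((affineSpan ℝ D : AffineSubspace ℝ (EuclideanSpace ℝ (Fin p))) : Set (EuclideanSpace ℝ (Fin p))) :=
        AffineSubspace.closed_of_finiteDimensional _
      have h2 : closure D ⊆ (affineSpan ℝ D : Set (EuclideanSpace ℝ (Fin p))) :=
        closure_minimal (subset_affineSpan ℝ D) h1
      have h3 : affineSpan ℝ C ≤ affineSpan ℝ D := affineSpan_le.2 (hclos.trans h2)
      rw [hCopen.affineSpan_eq_top hne] at h3
      exact top_unique h3
    obtain ⟨z, hz⟩ : (interior D).Nonempty :=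
      (hDconv.interior_nonempty_iff_affineSpan_eq_top).2 hspanD
    have hxint : x ∈ interior (closure D) := by
      have := interior_mono hclos
      rw [hCopen.interior_eq] at this
      exact this hx
    obtain ⟨δ, hδ, hball⟩ := Metric.isOpen_iff.1 isOpen_interior x hxint
    by_cases hxz : x = z
    · exact interior_subset (hxz ▸ hz)
    · set u := x - z with hu
      have hu0 : u ≠ 0 := sub_ne_zero.2 hxz
      have hun : 0 < ‖u‖ := norm_pos_iff.2 hu0
      set cc : ℝ := δ / (2 * ‖u‖) with hcc
      have hc : 0 < cc := by positivity
      set w := x + cc • u with hw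
      have hwball : w ∈ ball x δ := by
        rw [mem_ball, dist_eq_norm]
        have : w - x = cc • u := by rw [hw]; abel
        rw [this, norm_smul, Real.norm_eq_abs, abs_of_pos hc, hcc]
        have h2 : δ / (2*‖u‖) * ‖u‖ = δ/2 := by
          field_simp
        rw [h2]
        linarith
      have hwD : w ∈ closure D := interior_subset (hball hwball)
      have hc1 : (0:ℝ) < 1 + cc := by linarith
      have hab : cc/(1+cc) + 1/(1+cc) = 1 := by field_simp; ring
      have hx' : (cc/(1+cc)) • z + (1/(1+cc)) • w = x := by
        rw [hw, hu]
        match_scalars <;> field_simp <;> ring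
      have := hDconv.combo_interior_closure_mem_interior hz hwD
        (by positivity) (by positivity) hab
      rw [hx'] at this
      exact interior_subset this
  have hbddx : ∀ x ∈ C, BddAbove (Set.range fun n => f n x) := fun x hx => (hCD hx).2
  -- The pointwise supremum is convex, hence continuous, hence locally bounded
  set h : EuclideanSpace ℝ (Fin p) → ℝ := fun x => ⨆ n, f n x with hhdef
  have hhconv : ConvexOn ℝ C h := by
    refine ⟨hCconv, fun x hx y hy a b ha hb hab => ?_⟩
    simp only [smul_eq_mul, hhdef]
    refine ciSup_le fun n => ?_
    have h1 := (hconv n).2 hx hy ha hb hab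
    simp only [smul_eq_mul] at h1
    calc f n (a • x + b • y) ≤ a * f n x + b * f n y := h1
      _ ≤ a * (⨆ m, f m x) + b * (⨆ m, f m y) := by
          gcongr
          exacts [le_ciSup (hbddx x hx) n, le_ciSup (hbddx y hy) n]
  have hhcont : ContinuousOn h C := hhconv.continuousOn hCopen
  -- Local uniform Lipschitz bounds
  have key : ∀ x ∈ C, ∃ r > (0:ℝ), ball x r ⊆ C ∧
      ∃ K : NNReal, ∀ n, LipschitzOnWith K (f n) (ball x r) := by
    intro x hx
    have hcx : ContinuousAt h x := hhcont.continuousAt (hCopen.mem_nhds hx)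
    have hnb : h ⁻¹' (Set.Iio (h x + 1)) ∈ 𝓝 x := hcx (Iio_mem_nhds (lt_add_one (h x)))
    obtain ⟨r₁, hr₁, hball₁⟩ :=
      Metric.mem_nhds_iff.1 (Filter.inter_mem hnb (hCopen.mem_nhds hx))
    set M₁ := h x + 1 with hM₁
    have hup : ∀ n, ∀ y ∈ ball x r₁, f n y ≤ M₁ := by
      intro n y hy
      have hy' := hball₁ hy
      exact (le_ciSup (hbddx y hy'.2) n).trans hy'.1.le
    obtain ⟨c, hcC₀, hcx'⟩ : ∃ c ∈ C₀, dist c x < r₁/4 := by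
      obtain ⟨c, hc1, hc2⟩ := Metric.mem_closure_iff.1 (hdense hx) (r₁/4) (by positivity)
      exact ⟨c, hc1, by rwa [dist_comm]⟩
    obtain ⟨l, hl⟩ := hlim c hcC₀
    obtain ⟨B, hB⟩ := hl.bddBelow_range
    have hlow : ∀ n, ∀ y ∈ ball x (r₁/4), 2*B - M₁ ≤ f n y := by
      intro n y hy
      set z := (2:ℝ) • c - y with hz
      have hzc : z - c = c - y := by rw [hz]; module
      have hzball : z ∈ ball x r₁ := by
        rw [mem_ball]
        calc dist z x ≤ dist z c + dist c x := dist_triangle _ _ _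
          _ = dist c y + dist c x := by rw [show dist z c = dist c y by rw [dist_eq_norm, dist_eq_norm, hzc]]
          _ ≤ (dist c x + dist x y) + dist c x := by
              have := dist_triangle c x y
              linarith
          _ < r₁ := by
              have h1 : dist x y < r₁/4 := by rw [dist_comm]; exact mem_ball.1 hy
              linarith
      have hcmid : (1/2:ℝ) • y + (1/2:ℝ) • z = c := by rw [hz]; module
      have hyC : y ∈ C := (hball₁ (ball_subset_ball (by linarith) hy)).2
      have hzC : z ∈ C := (hball₁ hzball).2
      have hmid := (hconv n).2 hyC hzC (by norm_num : (0:ℝ) ≤ 1/2)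
        (by norm_num : (0:ℝ) ≤ 1/2) (by norm_num)
      rw [hcmid] at hmid
      simp only [smul_eq_mul] at hmid
      have hzM : f n z ≤ M₁ := hup n z hzball
      have hBc : B ≤ f n c := hB (Set.mem_range_self n)
      linarith
    set M := max M₁ (M₁ - 2*B) with hM
    have habs : ∀ n, ∀ y : EuclideanSpace ℝ (Fin p), dist y x < r₁/4 → |f n y| ≤ M := by
      intro n y hy
      rw [abs_le]
      constructor
      · have h1 := hlow n y (mem_ball.2 hy)
        have h2 := le_max_right M₁ (M₁ - 2*B)
        linarith
      · exact (hup n y (ball_subset_ball (by linarith) (mem_ball.2 hy))).trans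
          (le_max_left _ _)
    refine ⟨r₁/8, by positivity, ?_, (2*M/(r₁/8)).toNNReal, fun n => ?_⟩
    · exact (ball_subset_ball (by linarith)).trans (fun y hy => (hball₁ hy).2)
    · have hconv' : ConvexOn ℝ (ball x (r₁/4)) (f n) :=
        (hconv n).subset
          (fun y hy => (hball₁ (ball_subset_ball (by linarith) hy)).2)
          (convex_ball _ _)
      have hlip := hconv'.lipschitzOnWith_of_abs_le
        (by positivity : (0:ℝ) < r₁/8) (fun a ha => habs n a ha)
      have h48 : r₁/4 - r₁/8 = r₁/8 := by ring
      rwa [h48] at hlip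
  -- Quantitative local approximation by points of C₀
  have key2 : ∀ ε > (0:ℝ), ∀ x ∈ C, ∃ δ > (0:ℝ), ∃ c ∈ C₀,
      ∀ n, ∀ y ∈ ball x δ, dist (f n y) (f n c) ≤ ε := by
    intro ε hε x hx
    obtain ⟨r, hr, hrC, K, hK⟩ := key x hx
    set δ := min (r/2) (ε/(2*((K:ℝ)+1))) with hδdef
    have hδ : 0 < δ := lt_min (by positivity) (by positivity)
    obtain ⟨c, hcC₀, hcx⟩ : ∃ c ∈ C₀, dist c x < δ := by
      obtain ⟨c, hc1, hc2⟩ := Metric.mem_closure_iff.1 (hdense hx) δ hδ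
      exact ⟨c, hc1, by rwa [dist_comm]⟩
    refine ⟨δ, hδ, c, hcC₀, fun n y hy => ?_⟩
    have hδr : δ ≤ r/2 := min_le_left _ _
    have hyb : y ∈ ball x r := mem_ball.2 (lt_of_lt_of_le (mem_ball.1 hy) (by linarith))
    have hcb : c ∈ ball x r := mem_ball.2 (lt_of_lt_of_le hcx (by linarith))
    have h1 := (hK n).dist_le_mul y hyb c hcb
    have h2 : dist y c ≤ 2*δ := by
      have := dist_triangle y x c
      have h3 : dist x c < δ := by rwa [dist_comm] at hcx
      have h4 : dist y x < δ := mem_ball.1 hy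
      linarith
    have h5 : δ ≤ ε/(2*((K:ℝ)+1)) := min_le_right _ _
    have h6 : (0:ℝ) < 2*((K:ℝ)+1) := by positivity
    have h7 : δ * (2*((K:ℝ)+1)) ≤ ε := (le_div_iff₀ h6).1 h5
    have hK0 : (0:ℝ) ≤ (K:ℝ) := K.coe_nonneg
    calc dist (f n y) (f n c) ≤ (K:ℝ) * dist y c := h1
      _ ≤ (K:ℝ) * (2*δ) := by gcongr
      _ ≤ ε := by nlinarith [hδ.le]
  -- Uniform Cauchy on compact subsets
  have hUC : ∀ K : Set (EuclideanSpace ℝ (Fin p)), K ⊆ C → IsCompact K → UniformCauchySeqOn f atTop K := by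
    intro K hKC hKcomp
    rw [Metric.uniformCauchySeqOn_iff]
    intro ε hε
    have hε4 : (0:ℝ) < ε/4 := by positivity
    choose! δ hδ0 c hcC₀ hdist using fun x (hx : x ∈ K) => key2 (ε/4) hε4 x (hKC hx)
    obtain ⟨t, htK, hcover⟩ := hKcomp.elim_nhds_subcover (fun x => ball x (δ x))
      (fun x hx => ball_mem_nhds x (hδ0 x hx))
    have hcauchy : ∀ x ∈ t, ∃ N, ∀ m ≥ N, ∀ n ≥ N,
        dist (f m (c x)) (f n (c x)) < ε/4 := by
      intro x hxt
      obtain ⟨l, hl⟩ := hlim (c x) (hcC₀ x (htK x hxt))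
      exact Metric.cauchySeq_iff.1 hl.cauchySeq (ε/4) hε4
    choose! N hN using hcauchy
    refine ⟨t.sup N, fun m hm n hn y hy => ?_⟩
    have := hcover hy
    simp only [Set.mem_iUnion, exists_prop] at this
    obtain ⟨x, hxt, hyx⟩ := this
    have hxK := htK x hxt
    have h1 := hdist x hxK m y hyx
    have h2 := hdist x hxK n y hyx
    have h3 := hN x hxt m (le_trans (Finset.le_sup hxt) hm) n
      (le_trans (Finset.le_sup hxt) hn)
    calc dist (f m y) (f n y)
        ≤ dist (f m y) (f m (c x)) + dist (f m (c x)) (f n (c x))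
            + dist (f n (c x)) (f n y) := dist_triangle4 _ _ _ _
      _ < ε := by
          rw [dist_comm (f n (c x))]
          linarith
  -- Pointwise convergence on C
  have hptc : ∀ x ∈ C, ∃ l, Tendsto (fun n => f n x) atTop (𝓝 l) := by
    intro x hx
    have hc : CauchySeq fun n => f n x :=
      (hUC {x} (by simpa using hx) isCompact_singleton).cauchySeq rfl
    exact cauchySeq_tendsto_of_complete hc
  set g : EuclideanSpace ℝ (Fin p) → ℝ := fun x => limUnder atTop fun n => f n x with hgdef
  have hgt : ∀ x ∈ C, Tendsto (fun n => f n x) atTop (𝓝 (g x)) := by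
    intro x hx
    obtain ⟨l, hl⟩ := hptc x hx
    have : g x = l := hl.limUnder_eq
    rwa [this]
  have hgconv : ConvexOn ℝ C g := by
    refine ⟨hCconv, fun x hx y hy a b ha hb hab => ?_⟩
    have hxy : a • x + b • y ∈ C := hCconv hx hy ha hb hab
    simp only [smul_eq_mul]
    refine le_of_tendsto_of_tendsto' (hgt _ hxy)
      (((hgt x hx).const_mul a).add ((hgt y hy).const_mul b)) fun n => ?_
    have h1 := (hconv n).2 hx hy ha hb hab
    simpa using h1
  exact ⟨g, hgconv, hgt, fun K hKC hKcomp =>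
    (hUC K hKC hKcomp).tendstoUniformlyOn_of_tendsto (fun x hx => hgt x (hKC hx))⟩
end

section
/- Consider convex functions f_n : ℝ^p → ℝ of the form f_n(u) = uᵀ Σ_n u + R_n(u), where Σ_n are random symmetric matrices converging almost surely to a positive definite matrix Σ, and R_n(u) → 0 almost surely for every fixed u ∈ ℝ^p. Then any sequence (α_n) of minimizers of f_n satisfies ‖α_n‖ → 0 almost surely. -/
open Filter Topology MeasureTheory
open Metric

lemma abs_coord_le (p : ℕ) (x : EuclideanSpace ℝ (Fin p)) (i : Fin p) : |x i| ≤ ‖x‖ := by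
  rw [EuclideanSpace.norm_eq]
  have h1 : |x i| = Real.sqrt (‖x i‖ ^ 2) := by
    rw [Real.sqrt_sq_eq_abs]; simp
  rw [h1]
  apply Real.sqrt_le_sqrt
  exact Finset.single_le_sum (f := fun j => ‖x j‖ ^ 2) (fun j _ => by positivity) (Finset.mem_univ i)

lemma sum_single_eq (p : ℕ) (x : EuclideanSpace ℝ (Fin p)) :
    ∑ i, (x i) • EuclideanSpace.single i (1:ℝ) = x := by
  ext j
  have : (∑ i, (x i) • EuclideanSpace.single i (1:ℝ)) j = ∑ i, ((x i) • EuclideanSpace.single i (1:ℝ)) j :=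
    by rw [WithLp.ofLp_sum, Finset.sum_apply]
  rw [this]
  simp [EuclideanSpace.single_apply]

lemma qpos (p : ℕ) (S : Matrix (Fin p) (Fin p) ℝ) (h : S.PosDef) (x : EuclideanSpace ℝ (Fin p)) (hx : x ≠ 0) :
    0 < ∑ i, ∑ j, S i j * x i * x j := by
  have h2 := h.dotProduct_mulVec_pos (x := (x : Fin p → ℝ)) (fun hc => hx (by ext i; simpa using congrFun hc i))
  simp only [dotProduct, Matrix.mulVec, star_trivial] at h2
  calc (0:ℝ) < ∑ i, x i * ∑ j, S i j * x j := h2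
    _ = ∑ i, ∑ j, S i j * x i * x j := by
        refine Finset.sum_congr rfl fun i _ => ?_
        rw [Finset.mul_sum]
        exact Finset.sum_congr rfl fun j _ => by ring

lemma qcont (p : ℕ) (S : Matrix (Fin p) (Fin p) ℝ) :
    Continuous (fun x : EuclideanSpace ℝ (Fin p) => ∑ i, ∑ j, S i j * x i * x j) := by
  apply continuous_finset_sum _ fun i _ => continuous_finset_sum _ fun j _ => ?_
  exact (continuous_const.mul (EuclideanSpace.proj i).continuous).mul (EuclideanSpace.proj j).continuous

noncomputable def vmk (p : ℕ) (m : ℕ) (i : Fin p) (s : Bool) : EuclideanSpace ℝ (Fin p) :=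
  (if s then (m:ℝ) else -(m:ℝ)) • EuclideanSpace.single i 1

def Vset (p r : ℕ) : Set (EuclideanSpace ℝ (Fin p)) :=
  insert 0 (Set.range fun is : Fin p × Bool => vmk p r is.1 is.2)

lemma hull_mem (p r : ℕ) (hr : 0 < r) (x : EuclideanSpace ℝ (Fin p))
    (hx : ∑ i, |x i| ≤ (r:ℝ)) : x ∈ convexHull ℝ (Vset p r) := by
  have rpos : (0:ℝ) < r := by exact_mod_cast hr
  set w : Option (Fin p) → ℝ := fun o => o.elim (1 - (∑ i, |x i|)/r) (fun i => |x i| / r) with hw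
  set z : Option (Fin p) → EuclideanSpace ℝ (Fin p) :=
    fun o => o.elim 0 (fun i => vmk p r i (decide (0 ≤ x i))) with hzdef
  have hw0 : ∀ o ∈ (Finset.univ : Finset (Option (Fin p))), 0 ≤ w o := by
    rintro (_ | i) -
    · simp only [hw, Option.elim]
      have : (∑ i, |x i|)/r ≤ 1 := by
        rw [div_le_one rpos]; exact hx
      linarith
    · simp only [hw, Option.elim]
      positivity
  have hw1 : ∑ o : Option (Fin p), w o = 1 := by
    rw [Fintype.sum_option]
    simp only [hw, Option.elim]
    rw [← Finset.sum_div]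
    ring
  have hz : ∀ o ∈ (Finset.univ : Finset (Option (Fin p))), z o ∈ convexHull ℝ (Vset p r) := by
    rintro (_ | i) -
    · exact subset_convexHull ℝ _ (Set.mem_insert _ _)
    · exact subset_convexHull ℝ _ (Set.mem_insert_of_mem _ ⟨(i, decide (0 ≤ x i)), rfl⟩)
  have hsum : ∑ o : Option (Fin p), w o • z o = x := by
    rw [Fintype.sum_option]
    have h0 : w none • z none = 0 := by simp [hw, hzdef]
    rw [h0, zero_add]
    rw [show ∑ i, w (some i) • z (some i) = ∑ i, (x i) • EuclideanSpace.single i (1:ℝ) from ?_]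
    · exact sum_single_eq p x
    refine Finset.sum_congr rfl fun i _ => ?_
    simp only [hw, hzdef, Option.elim, vmk]
    rcases le_or_gt 0 (x i) with hxi | hxi
    · rw [if_pos (decide_eq_true hxi), smul_smul, abs_of_nonneg hxi, div_mul_cancel₀ _ rpos.ne']
    · rw [if_neg (by simp [hxi.not_ge]), smul_smul, abs_of_neg hxi, neg_div, neg_mul_neg,
        div_mul_cancel₀ _ rpos.ne']
  rw [← hsum]
  exact (convex_convexHull ℝ (Vset p r)).sum_mem hw0 hw1 hz

set_option maxHeartbeats 1000000 in
lemma key (p : ℕ) (hp : 0 < p)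
    (g : ℕ → EuclideanSpace ℝ (Fin p) → ℝ)
    (q : EuclideanSpace ℝ (Fin p) → ℝ)
    (hqc : Continuous q) (hq0 : q 0 = 0)
    (hqpos : ∀ x : EuclideanSpace ℝ (Fin p), x ≠ 0 → 0 < q x)
    (hgconv : ∀ n, ConvexOn ℝ Set.univ (g n))
    (D : Set (EuclideanSpace ℝ (Fin p))) (hD : Dense D)
    (hptw : ∀ u ∈ D, Tendsto (fun n => g n u) atTop (𝓝 (q u)))
    (hvert : ∀ (m : ℕ) (i : Fin p) (s : Bool),
      Tendsto (fun n => g n (vmk p m i s)) atTop (𝓝 (q (vmk p m i s))))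
    (β : ℕ → EuclideanSpace ℝ (Fin p)) (hβ : ∀ n u, g n (β n) ≤ g n u) :
    Tendsto (fun n => ‖β n‖) atTop (𝓝 0) := by
  have i0 : Fin p := ⟨0, hp⟩
  -- convergence at 0
  have h0conv : Tendsto (fun n => g n 0) atTop (𝓝 0) := by
    have hv0 : vmk p 0 i0 true = (0 : EuclideanSpace ℝ (Fin p)) := by
      simp [vmk]
    have := hvert 0 i0 true
    rw [hv0, hq0] at this
    exact this
  have main : ∀ δ : ℝ, 0 < δ → ∀ᶠ n in atTop, ‖β n‖ < δ := by
    intro δ hδ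
    -- annulus minimum
    set A : Set (EuclideanSpace ℝ (Fin p)) :=
      Metric.closedBall 0 (2*δ) ∩ {x | δ/2 ≤ ‖x‖} with hA
    have hAc : IsCompact A :=
      (isCompact_closedBall 0 (2*δ)).inter_right (isClosed_le continuous_const continuous_norm)
    have hAne : A.Nonempty := by
      refine ⟨δ • EuclideanSpace.single i0 1, ?_, ?_⟩
      · rw [Metric.mem_closedBall, dist_zero_right, norm_smul, EuclideanSpace.norm_single]
        simp [abs_of_nonneg hδ.le]
        linarith
      · simp only [Set.mem_setOf_eq, norm_smul, EuclideanSpace.norm_single]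
        simp [abs_of_nonneg hδ.le]
        linarith
    obtain ⟨xm, hxmA, hxm⟩ := hAc.exists_isMinOn hAne hqc.continuousOn
    set m : ℝ := q xm with hmdef
    have hxm0 : xm ≠ 0 := by
      intro h0
      have := hxmA.2
      rw [h0] at this
      simp only [Set.mem_setOf_eq, norm_zero] at this
      linarith
    have hm : 0 < m := hqpos xm hxm0
    -- vertex radius
    obtain ⟨r, hr⟩ := exists_nat_gt ((p:ℝ) * (4*δ))
    have hrpos : 0 < r := by
      by_contra h
      push_neg at h
      interval_cases r
      · simp only [Nat.cast_zero] at hr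
        have : (0:ℝ) < (p:ℝ) * (4*δ) := by positivity
        linarith
    -- bound at vertices
    have hne : (Finset.univ : Finset (Fin p × Bool)).Nonempty := by
      refine ⟨(i0, true), Finset.mem_univ _⟩
    set M : ℝ := max (Finset.univ.sup' hne (fun is : Fin p × Bool => q (vmk p r is.1 is.2))) 0 + 1
      with hMdef
    have hM1 : 1 ≤ M := by
      have : (0:ℝ) ≤ max (Finset.univ.sup' hne (fun is : Fin p × Bool => q (vmk p r is.1 is.2))) 0 :=
        le_max_right _ _
      linarith
    have hub : ∀ᶠ n in atTop, ∀ is : Fin p × Bool, g n (vmk p r is.1 is.2) ≤ M := by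
      rw [eventually_all]
      intro is
      refine ((hvert r is.1 is.2).eventually_lt_const ?_).mono fun n hn => hn.le
      have h1 : q (vmk p r is.1 is.2) ≤ Finset.univ.sup' hne
          (fun is : Fin p × Bool => q (vmk p r is.1 is.2)) :=
        Finset.le_sup' (f := fun is : Fin p × Bool => q (vmk p r is.1 is.2)) (Finset.mem_univ is)
      have h2 := le_max_left (Finset.univ.sup' hne (fun is : Fin p × Bool => q (vmk p r is.1 is.2))) (0:ℝ)
      linarith
    -- small value at 0
    have h0small : ∀ᶠ n in atTop, |g n 0| < min 1 (m/4) := by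
      have hpos : 0 < min 1 (m/4) := lt_min one_pos (by linarith)
      have := h0conv.eventually (Metric.ball_mem_nhds (0:ℝ) hpos)
      refine this.mono fun n hn => ?_
      rwa [Real.dist_eq, sub_zero] at hn
    -- upper bound on ball 4δ
    have hub2 : ∀ᶠ n in atTop, ∀ x ∈ Metric.closedBall (0:EuclideanSpace ℝ (Fin p)) (4*δ),
        g n x ≤ M := by
      filter_upwards [hub, h0small] with n hn h0n
      intro x hx
      have hsum : ∑ i, |x i| ≤ (r:ℝ) := by
        have h1 : ∑ i, |x i| ≤ ∑ _i : Fin p, ‖x‖ :=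
          Finset.sum_le_sum fun i _ => abs_coord_le p x i
        rw [Finset.sum_const, Finset.card_univ, Fintype.card_fin, nsmul_eq_mul] at h1
        have h2 : ‖x‖ ≤ 4*δ := by rwa [Metric.mem_closedBall, dist_zero_right] at hx
        have h3 : (p:ℝ) * ‖x‖ ≤ (p:ℝ) * (4*δ) := by
          apply mul_le_mul_of_nonneg_left h2 (by positivity)
        linarith
      have hhull : x ∈ convexHull ℝ (Vset p r) := hull_mem p r hrpos x hsum
      obtain ⟨y, hy, hle⟩ := (hgconv n).exists_ge_of_mem_convexHull (Set.subset_univ _) hhull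
      rcases hy with hy0 | ⟨is, rfl⟩
      · rw [hy0] at hle
        have : g n 0 ≤ |g n 0| := le_abs_self _
        have h1 : |g n 0| < 1 := lt_of_lt_of_le h0n (min_le_left _ _)
        linarith
      · exact hle.trans (hn is)
    -- Lipschitz
    set K : ℝ := 2*(M+2)/δ with hKdef
    have hKpos : 0 < K := by
      apply div_pos
      · linarith
      · exact hδ
    have hlip : ∀ᶠ n in atTop, LipschitzOnWith (2*(M+2)/δ).toNNReal (g n)
        (Metric.ball (0:EuclideanSpace ℝ (Fin p)) (3*δ)) := by
      filter_upwards [hub2, h0small] with n hn h0n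
      have habs : ∀ a : EuclideanSpace ℝ (Fin p), dist a 0 < 4*δ → |g n a| ≤ M + 2 := by
        intro a ha
        have ha' : a ∈ Metric.closedBall (0:EuclideanSpace ℝ (Fin p)) (4*δ) :=
          Metric.mem_closedBall.2 ha.le
        have hna' : -a ∈ Metric.closedBall (0:EuclideanSpace ℝ (Fin p)) (4*δ) := by
          rw [Metric.mem_closedBall, dist_zero_right, norm_neg]
          rw [Metric.mem_closedBall, dist_zero_right] at ha'
          exact ha'
        have hup := hn a ha'
        have hupn := hn (-a) hna'
        have hmid := (hgconv n).2 (Set.mem_univ a) (Set.mem_univ (-a))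
          (by norm_num : (0:ℝ) ≤ 1/2) (by norm_num : (0:ℝ) ≤ 1/2) (by norm_num)
        have hmid' : g n 0 ≤ 1/2 * g n a + 1/2 * g n (-a) := by
          have heq : (1/2 : ℝ) • a + (1/2 : ℝ) • (-a) = (0:EuclideanSpace ℝ (Fin p)) := by
            rw [smul_neg, add_neg_cancel]
          rw [heq] at hmid
          exact hmid
        have h0b : -1 < g n 0 := by
          have h1 : |g n 0| < 1 := lt_of_lt_of_le h0n (min_le_left _ _)
          have := abs_lt.1 h1
          linarith [this.1]
        rw [abs_le]
        constructor
        · nlinarith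
        · linarith
      have hcb : ConvexOn ℝ (Metric.ball (0:EuclideanSpace ℝ (Fin p)) (4*δ)) (g n) :=
        (hgconv n).subset (Set.subset_univ _) (convex_ball _ _)
      have := hcb.lipschitzOnWith_of_abs_le hδ habs
      rwa [show 4*δ - δ = 3*δ by ring] at this
    -- epsilon and net
    set ε : ℝ := min (δ/2) (m/(8*(K+1))) with hεdef
    have hεpos : 0 < ε := lt_min (by linarith) (by positivity)
    have hεδ : ε ≤ δ/2 := min_le_left _ _
    have hcov : (Metric.sphere (0:EuclideanSpace ℝ (Fin p)) δ) ⊆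
        ⋃ y : D, Metric.ball (y:EuclideanSpace ℝ (Fin p)) ε := by
      intro x hx
      obtain ⟨y, hy⟩ := Metric.dense_iff.1 hD x ε hεpos
      refine Set.mem_iUnion.2 ⟨⟨y, hy.2⟩, ?_⟩
      rw [Metric.mem_ball, dist_comm]
      exact Metric.mem_ball.1 hy.1
    obtain ⟨t, ht⟩ := (isCompact_sphere (0:EuclideanSpace ℝ (Fin p)) δ).elim_finite_subcover
      (fun y : D => Metric.ball (y:EuclideanSpace ℝ (Fin p)) ε) (fun y => isOpen_ball) hcov
    -- eventual values at net points
    have hnet : ∀ᶠ n in atTop, ∀ y ∈ t, |g n (y:EuclideanSpace ℝ (Fin p))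
        - q (y:EuclideanSpace ℝ (Fin p))| < m/4 := by
      rw [eventually_all_finset]
      intro y hy
      have h1 := hptw (y:EuclideanSpace ℝ (Fin p)) y.2
      have := h1.eventually (Metric.ball_mem_nhds (q (y:EuclideanSpace ℝ (Fin p))) (by linarith : (0:ℝ) < m/4))
      refine this.mono fun n hn => ?_
      rwa [Real.dist_eq] at hn
    -- conclusion
    filter_upwards [hlip, hnet, h0small] with n hlipn hnetn h0n
    by_contra hcon
    push_neg at hcon
    have hβpos : 0 < ‖β n‖ := lt_of_lt_of_le hδ hcon
    set c : EuclideanSpace ℝ (Fin p) := (δ / ‖β n‖) • β n with hcdef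
    have hc : ‖c‖ = δ := by
      rw [hcdef, norm_smul, Real.norm_eq_abs, abs_of_nonneg (by positivity), div_mul_cancel₀ _ hβpos.ne']
    have h1 : g n c ≤ g n 0 := by
      set s : ℝ := δ / ‖β n‖ with hsdef
      have hs0 : 0 ≤ s := by positivity
      have hs1 : s ≤ 1 := by
        rw [hsdef, div_le_one hβpos]
        exact hcon
      have hcomb := (hgconv n).2 (Set.mem_univ (β n)) (Set.mem_univ (0:EuclideanSpace ℝ (Fin p)))
        hs0 (by linarith : 0 ≤ 1 - s) (by ring)
      rw [smul_zero, add_zero] at hcomb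
      calc g n c ≤ s * g n (β n) + (1-s) * g n 0 := hcomb
        _ ≤ s * g n 0 + (1-s) * g n 0 := by
            have := hβ n 0
            nlinarith
        _ = g n 0 := by ring
    have hcs : c ∈ Metric.sphere (0:EuclideanSpace ℝ (Fin p)) δ := by
      rw [mem_sphere_zero_iff_norm]
      exact hc
    obtain ⟨y, hyt, hcy⟩ := Set.mem_iUnion₂.1 (ht hcs)
    have hdcy : dist c (y:EuclideanSpace ℝ (Fin p)) < ε := Metric.mem_ball.1 hcy
    have hyn1 : δ - ε ≤ ‖(y:EuclideanSpace ℝ (Fin p))‖ := by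
      have := norm_sub_norm_le c (y:EuclideanSpace ℝ (Fin p))
      rw [← dist_eq_norm] at this
      linarith [hc ▸ this]
    have hyn2 : ‖(y:EuclideanSpace ℝ (Fin p))‖ ≤ δ + ε := by
      have := norm_le_norm_add_norm_sub' (y:EuclideanSpace ℝ (Fin p)) c
      rw [← neg_sub c (y:EuclideanSpace ℝ (Fin p)), norm_neg, ← dist_eq_norm] at this
      linarith [hc ▸ this]
    have hyA : (y:EuclideanSpace ℝ (Fin p)) ∈ A := by
      constructor
      · rw [Metric.mem_closedBall, dist_zero_right]
        linarith
      · simp only [Set.mem_setOf_eq]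
        linarith
    have hqy : m ≤ q (y:EuclideanSpace ℝ (Fin p)) := hxm hyA
    have hgy : q (y:EuclideanSpace ℝ (Fin p)) - m/4 < g n (y:EuclideanSpace ℝ (Fin p)) := by
      have := abs_lt.1 (hnetn y hyt)
      linarith [this.1]
    have hcb3 : c ∈ Metric.ball (0:EuclideanSpace ℝ (Fin p)) (3*δ) := by
      rw [Metric.mem_ball, dist_zero_right, hc]
      linarith
    have hyb3 : (y:EuclideanSpace ℝ (Fin p)) ∈ Metric.ball (0:EuclideanSpace ℝ (Fin p)) (3*δ) := by
      rw [Metric.mem_ball, dist_zero_right]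
      linarith
    have hld : dist (g n c) (g n (y:EuclideanSpace ℝ (Fin p))) ≤ K * dist c (y:EuclideanSpace ℝ (Fin p)) := by
      have := hlipn.dist_le_mul c hcb3 (y:EuclideanSpace ℝ (Fin p)) hyb3
      rwa [Real.coe_toNNReal _ (by positivity : (0:ℝ) ≤ 2*(M+2)/δ)] at this
    have hKε : K * ε ≤ m/8 := by
      have hε2 : ε * (8*(K+1)) ≤ m := by
        have h1 : ε ≤ m/(8*(K+1)) := min_le_right _ _
        have h2 : (0:ℝ) < 8*(K+1) := by positivity
        calc ε * (8*(K+1)) ≤ m/(8*(K+1)) * (8*(K+1)) := by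
              apply mul_le_mul_of_nonneg_right h1 h2.le
          _ = m := div_mul_cancel₀ _ h2.ne'
      nlinarith [hεpos.le, hKpos.le]
    have h2 : g n (y:EuclideanSpace ℝ (Fin p)) - g n c ≤ K * ε := by
      have ha : g n (y:EuclideanSpace ℝ (Fin p)) - g n c
          ≤ dist (g n c) (g n (y:EuclideanSpace ℝ (Fin p))) := by
        rw [dist_comm, Real.dist_eq]
        exact le_abs_self _
      have hb : K * dist c (y:EuclideanSpace ℝ (Fin p)) ≤ K * ε :=
        mul_le_mul_of_nonneg_left hdcy.le hKpos.le
      linarith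
    have hg0 : g n 0 < m/4 := by
      have ha := lt_of_lt_of_le h0n (min_le_right _ _)
      have hb := le_abs_self (g n 0)
      linarith
    linarith
  rw [Metric.tendsto_atTop]
  intro ε hε
  obtain ⟨N, hN⟩ := eventually_atTop.1 (main ε hε)
  exact ⟨N, fun n hn => by
    rw [Real.dist_eq, sub_zero, abs_of_nonneg (norm_nonneg _)]
    exact hN n hn⟩

/-- minimizers of random convex functions of the form
`f_n(u) = uᵀ Σ_n u + R_n(u)` with `Σ_n → Σ` positive definite a.s. and `R_n(u) → 0` a.s.
pointwise, converge to `0` in norm almost surely. -/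
theorem stmt2 (p : ℕ) (Ω : Type*) [MeasurableSpace Ω] (P : Measure Ω)
    [IsProbabilityMeasure P]
    (Sn : ℕ → Ω → Matrix (Fin p) (Fin p) ℝ) (S : Matrix (Fin p) (Fin p) ℝ)
    (R : ℕ → Ω → EuclideanSpace ℝ (Fin p) → ℝ)
    (f : ℕ → Ω → EuclideanSpace ℝ (Fin p) → ℝ)
    (α : ℕ → Ω → EuclideanSpace ℝ (Fin p))
    (hf : ∀ n ω u, f n ω u = (∑ i, ∑ j, Sn n ω i j * u i * u j) + R n ω u)
    (hconv : ∀ n ω, ConvexOn ℝ Set.univ (f n ω))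
    (hSsymm : S.IsSymm) (hSpd : S.PosDef)
    (hSconv : ∀ᵐ ω ∂P, ∀ i j, Tendsto (fun n => Sn n ω i j) atTop (𝓝 (S i j)))
    (hR : ∀ u, ∀ᵐ ω ∂P, Tendsto (fun n => R n ω u) atTop (𝓝 0))
    (hmin : ∀ n ω u, f n ω (α n ω) ≤ f n ω u) :
    ∀ᵐ ω ∂P, Tendsto (fun n => ‖α n ω‖) atTop (𝓝 0) := by
  rcases Nat.eq_zero_or_pos p with hp0 | hp
  · subst hp0
    have hz : ∀ n ω, ‖α n ω‖ = 0 := by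
      intro n ω
      rw [EuclideanSpace.norm_eq]
      simp
    refine Filter.Eventually.of_forall fun ω => ?_
    simp only [hz]
    exact tendsto_const_nhds
  · set q : EuclideanSpace ℝ (Fin p) → ℝ := fun u => ∑ i, ∑ j, S i j * u i * u j with hq
    obtain ⟨D, hDc, hDd⟩ := TopologicalSpace.exists_countable_dense (EuclideanSpace ℝ (Fin p))
    set T : Set (EuclideanSpace ℝ (Fin p)) :=
      D ∪ Set.range (fun mis : ℕ × Fin p × Bool => vmk p mis.1 mis.2.1 mis.2.2) with hT
    have hTc : T.Countable := hDc.union (Set.countable_range _)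
    have hRT : ∀ᵐ ω ∂P, ∀ u ∈ T, Tendsto (fun n => R n ω u) atTop (𝓝 0) :=
      (ae_ball_iff hTc).2 fun u _ => hR u
    filter_upwards [hSconv, hRT] with ω hSω hRω
    have hg : ∀ u : EuclideanSpace ℝ (Fin p), Tendsto (fun n => R n ω u) atTop (𝓝 0) →
        Tendsto (fun n => f n ω u) atTop (𝓝 (q u)) := by
      intro u hu
      have hquad : Tendsto (fun n => ∑ i, ∑ j, Sn n ω i j * u i * u j) atTop (𝓝 (q u)) :=
        tendsto_finset_sum _ fun i _ => tendsto_finset_sum _ fun j _ =>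
          ((hSω i j).mul_const _).mul_const _
      have h2 := hquad.add hu
      rw [add_zero] at h2
      have heq : (fun n => f n ω u) =
          (fun n => (∑ i, ∑ j, Sn n ω i j * u i * u j) + R n ω u) := by
        funext n
        exact hf n ω u
      rw [heq]
      exact h2
    have hq0 : q 0 = 0 := by
      simp [hq]
    exact key p hp (fun n => f n ω) q (qcont p S) hq0 (fun x hx => qpos p S hSpd x hx)
      (fun n => hconv n ω) D hDd
      (fun u hu => hg u (hRω u (Or.inl hu)))
      (fun m i s => hg _ (hRω _ (Or.inr ⟨(m, i, s), rfl⟩)))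
      (fun n => α n ω) (fun n u => hmin n ω u)
end

section
/- Let (β̂_n) be a sequence of random vectors in ℝ^p with ‖β̂_n − β‖ = o(n^{−1/2} log n) almost surely, and let (a_n) be a positive sequence with a_n → 0 and (n^{−1/2} log n)/a_n → 0. Define the thresholded estimator β̃_n componentwise by β̃_{n,j} = β̂_{n,j} · 1{|β̂_{n,j}| > a_n}. Then almost surely, for all sufficiently large n: β̃_{n,j} = β̂_{n,j} and sign(β̃_{n,j}) = sign(β_j) for every j with β_j ≠ 0, and β̃_{n,j} = 0 for every j with β_j = 0. -/
open Filter Topology MeasureTheory Asymptotics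

lemma abs_apply_le_norm {p : ℕ} (x : EuclideanSpace ℝ (Fin p)) (j : Fin p) :
    |x j| ≤ ‖x‖ := by
  rw [EuclideanSpace.norm_eq]
  have h1 : |x j| = Real.sqrt (‖x j‖ ^ 2) := by
    rw [Real.sqrt_sq_eq_abs]; simp
  rw [h1]
  apply Real.sqrt_le_sqrt
  exact Finset.single_le_sum (f := fun i => ‖x i‖ ^ 2)
    (fun i _ => by positivity) (Finset.mem_univ j)

/-- the thresholded Lasso estimator is eventually sign-consistent almost
surely: with `‖β̂_n − β‖ = o(n^{-1/2} log n)` a.s. and thresholds `a_n → 0` with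
`(n^{-1/2} log n)/a_n → 0`, eventually `β̃_{n,j} = β̂_{n,j}` with the sign of `β_j` on the
support of `β`, and `β̃_{n,j} = 0` off the support. -/
theorem stmt7 (p : ℕ) (Ω : Type*) [MeasurableSpace Ω] (P : Measure Ω)
    [IsProbabilityMeasure P]
    (β : EuclideanSpace ℝ (Fin p)) (βhat : ℕ → Ω → EuclideanSpace ℝ (Fin p))
    (a : ℕ → ℝ) (hapos : ∀ n, 0 < a n)
    (ha0 : Tendsto a atTop (𝓝 0))
    (harate : Tendsto (fun n : ℕ => ((n : ℝ) ^ (-(1/2 : ℝ)) * Real.log n) / a n) atTop (𝓝 0))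
    (hrate : ∀ᵐ ω ∂P,
      (fun n => ‖βhat n ω - β‖) =o[atTop]
        (fun n : ℕ => (n : ℝ) ^ (-(1/2 : ℝ)) * Real.log n)) :
    ∀ᵐ ω ∂P, ∃ N : ℕ, ∀ n ≥ N,
      (∀ j, β j ≠ 0 →
        (if a n < |βhat n ω j| then βhat n ω j else 0) = βhat n ω j ∧
        Real.sign (if a n < |βhat n ω j| then βhat n ω j else 0) = Real.sign (β j)) ∧
      (∀ j, β j = 0 → (if a n < |βhat n ω j| then βhat n ω j else 0) = 0) := by
  filter_upwards [hrate] with ω hω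
  -- rate function is o(a)
  have hra : (fun n : ℕ => (n : ℝ) ^ (-(1/2 : ℝ)) * Real.log n) =o[atTop] a := by
    rw [isLittleO_iff_tendsto (fun n h => absurd h (ne_of_gt (hapos n)))]
    exact harate
  have hfa : (fun n => ‖βhat n ω - β‖) =o[atTop] a := hω.trans hra
  -- eventually ‖β̂ - β‖ ≤ a n / 2
  have h1 : ∀ᶠ n in atTop, ‖βhat n ω - β‖ ≤ (1/2) * a n := by
    filter_upwards [hfa.def (by norm_num : (0:ℝ) < 1/2)] with n hn
    have : ‖a n‖ = a n := abs_of_pos (hapos n)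
    simpa [Real.norm_eq_abs, abs_of_nonneg (norm_nonneg _), this] using hn
  -- ‖β̂ - β‖ → 0
  have hto0 : Tendsto (fun n => ‖βhat n ω - β‖) atTop (𝓝 0) := by
    simpa using hfa.isBigO.trans_tendsto ha0
  -- per nonzero component: eventually a n < |β j|/2 and ‖diff‖ < |β j|/2
  have h2 : ∀ᶠ n in atTop, ∀ j : Fin p, β j ≠ 0 →
      a n < |β j| / 2 ∧ ‖βhat n ω - β‖ < |β j| / 2 := by
    rw [eventually_all]
    intro j
    by_cases hj : β j = 0
    · exact Eventually.of_forall fun n h => absurd hj h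
    · have hpos : 0 < |β j| / 2 := by positivity
      filter_upwards [ha0.eventually_lt_const hpos, hto0.eventually_lt_const hpos]
        with n h h' _
      exact ⟨h, h'⟩
  rw [← eventually_atTop]
  filter_upwards [h1, h2] with n hn1 hn2
  constructor
  · intro j hj
    obtain ⟨ha2, hd2⟩ := hn2 j hj
    have hdj : |βhat n ω j - β j| < |β j| / 2 :=
      lt_of_le_of_lt (abs_apply_le_norm (βhat n ω - β) j) hd2
    have hbig : a n < |βhat n ω j| := by
      have : |β j| - |β j| / 2 < |βhat n ω j| := by
        have := abs_sub_abs_le_abs_sub (β j) (βhat n ω j)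
        rw [abs_sub_comm] at this
        linarith
      linarith
    rw [if_pos hbig]
    refine ⟨rfl, ?_⟩
    rcases lt_or_gt_of_ne hj with h | h
    · have : βhat n ω j < 0 := by
        have : |β j| = -β j := abs_of_neg h
        rw [abs_lt] at hdj; linarith
      rw [Real.sign_of_neg this, Real.sign_of_neg h]
    · have : 0 < βhat n ω j := by
        have : |β j| = β j := abs_of_pos h
        rw [abs_lt] at hdj; linarith
      rw [Real.sign_of_pos this, Real.sign_of_pos h]
  · intro j hj
    have : |βhat n ω j| ≤ (1/2) * a n := by
      have := abs_apply_le_norm (βhat n ω - β) j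
      simp only [PiLp.sub_apply, hj, sub_zero] at this
      linarith
    rw [if_neg (by push_neg; linarith [hapos n])]
end

section
/- Let β ∈ ℝ^p with β_j ≠ 0 exactly for j ∈ {1,…,p₀} and let λ_n ≥ 0 with n^{−1/2} λ_n → λ₀ ∈ [0,∞). Then for every u ∈ ℝ^p, λ_n Σ_{j=1}^p ( |β_j + u_j/√n| − |β_j| ) → λ₀ ( Σ_{j=1}^{p₀} sign(β_j) u_j + Σ_{j=p₀+1}^{p} |u_j| ) as n → ∞. -/
open Filter Topology

/-- limit of the Lasso penalty difference term.  If `β_j ≠ 0` exactly for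
`j < p₀` and `λ_n/√n → lam0`, then
`λ_n Σ_j (|β_j + u_j/√n| − |β_j|) → lam0 (Σ_{j<p₀} sign(β_j) u_j + Σ_{j≥p₀} |u_j|)`. -/
theorem stmt8 (p p₀ : ℕ) (hp : p₀ ≤ p) (β : Fin p → ℝ)
    (hsupp : ∀ j : Fin p, β j ≠ 0 ↔ (j : ℕ) < p₀)
    (lam : ℕ → ℝ) (hlam : ∀ n, 0 ≤ lam n) (lam0 : ℝ) (hlam0 : 0 ≤ lam0)
    (hlimit : Tendsto (fun n => lam n / Real.sqrt n) atTop (𝓝 lam0))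
    (u : Fin p → ℝ) :
    Tendsto (fun n : ℕ => lam n * ∑ j, (|β j + u j / Real.sqrt n| - |β j|)) atTop
      (𝓝 (lam0 * ∑ j : Fin p, if (j : ℕ) < p₀ then Real.sign (β j) * u j else |u j|)) := by
  set S := ∑ j : Fin p, if (j : ℕ) < p₀ then Real.sign (β j) * u j else |u j| with hS
  have hsqrt : Tendsto (fun n : ℕ => Real.sqrt n) atTop atTop := by
    have h := (tendsto_rpow_atTop (by norm_num : (0:ℝ) < 1/2)).comp
      (tendsto_natCast_atTop_atTop (R := ℝ))
    exact h.congr fun n => (Real.sqrt_eq_rpow _).symm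
  have hmain : ∀ j : Fin p, ∀ᶠ n : ℕ in atTop,
      Real.sqrt n * (|β j + u j / Real.sqrt n| - |β j|)
        = (if (j : ℕ) < p₀ then Real.sign (β j) * u j else |u j|) := by
    intro j
    by_cases hb : β j = 0
    · have hj : ¬ ((j : ℕ) < p₀) := fun h => (hsupp j).mpr h hb
      filter_upwards [eventually_ge_atTop 1] with n hn
      have hpos : 0 < Real.sqrt n := Real.sqrt_pos.mpr (by exact_mod_cast Nat.lt_of_lt_of_le Nat.zero_lt_one hn)
      rw [if_neg hj, hb]
      rw [zero_add, abs_zero, sub_zero, abs_div, abs_of_pos hpos,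
        mul_div_cancel₀ _ hpos.ne']
    · have hj : (j : ℕ) < p₀ := (hsupp j).mp hb
      have h0 : Tendsto (fun n : ℕ => |u j / Real.sqrt n|) atTop (𝓝 0) := by
        have : Tendsto (fun n : ℕ => u j / Real.sqrt n) atTop (𝓝 0) :=
          Tendsto.div_atTop tendsto_const_nhds hsqrt
        simpa using this.abs
      have hev : ∀ᶠ n : ℕ in atTop, |u j / Real.sqrt n| < |β j| :=
        h0.eventually_lt_const (abs_pos.mpr hb)
      filter_upwards [hev, eventually_ge_atTop 1] with n hlt hn
      have hpos : 0 < Real.sqrt n := Real.sqrt_pos.mpr (by exact_mod_cast Nat.lt_of_lt_of_le Nat.zero_lt_one hn)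
      rw [if_pos hj]
      rcases lt_or_gt_of_ne hb with hneg | hposb
      · have habs : |β j + u j / Real.sqrt n| = -(β j + u j / Real.sqrt n) := by
          apply abs_of_neg
          have := (abs_lt.mp hlt).2
          rw [abs_of_neg hneg] at this
          linarith
        rw [habs, Real.sign_of_neg hneg]
        have : -(β j + u j / Real.sqrt n) - |β j| = -(u j / Real.sqrt n) := by
          rw [abs_of_neg hneg]; ring
        rw [this, mul_neg, mul_div_cancel₀ _ hpos.ne', neg_one_mul]
      · have habs : |β j + u j / Real.sqrt n| = β j + u j / Real.sqrt n := by
          apply abs_of_pos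
          have := (abs_lt.mp hlt).1
          rw [abs_of_pos hposb] at this
          linarith
        rw [habs, Real.sign_of_pos hposb]
        have : β j + u j / Real.sqrt n - |β j| = u j / Real.sqrt n := by
          rw [abs_of_pos hposb]; ring
        rw [this, mul_div_cancel₀ _ hpos.ne', one_mul]
  have hfinal : (fun n : ℕ => lam n * ∑ j, (|β j + u j / Real.sqrt n| - |β j|))
      =ᶠ[atTop] fun n : ℕ => lam n / Real.sqrt n * S := by
    filter_upwards [eventually_all.mpr hmain, eventually_ge_atTop 1] with n hn hn1
    have hpos : 0 < Real.sqrt n := Real.sqrt_pos.mpr (by exact_mod_cast Nat.lt_of_lt_of_le Nat.zero_lt_one hn1)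
    have hsum : Real.sqrt n * ∑ j, (|β j + u j / Real.sqrt n| - |β j|) = S := by
      rw [Finset.mul_sum, hS]
      exact Finset.sum_congr rfl fun j _ => hn j
    have : (∑ j, (|β j + u j / Real.sqrt n| - |β j|)) = S / Real.sqrt n := by
      rw [eq_div_iff hpos.ne', mul_comm]; exact hsum
    rw [this]; ring
  exact (hlimit.mul_const S).congr' hfinal.symm
end

section
/- Let U_n and U_∞ be convex functions ℝ^p → ℝ (realized on a common probability space) such that U_∞ has a unique minimizer ξ_∞, U_n → U_∞ uniformly on compact subsets of ℝ^p, and ξ_n is a minimizer of U_n for each n. Then ξ_n → ξ_∞. -/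
open Filter Topology

/-- deterministic argmin continuity theorem for convex functions: if convex
`U_n → U_∞` uniformly on compact sets, `U_∞` is convex with unique minimizer `ξ_∞`, and
`ξ_n` minimizes `U_n`, then `ξ_n → ξ_∞`. -/
theorem stmt14 (p : ℕ) (U : ℕ → EuclideanSpace ℝ (Fin p) → ℝ)
    (Uinf : EuclideanSpace ℝ (Fin p) → ℝ)
    (ξinf : EuclideanSpace ℝ (Fin p)) (ξ : ℕ → EuclideanSpace ℝ (Fin p))
    (hUconv : ∀ n, ConvexOn ℝ Set.univ (U n))
    (hUinfconv : ConvexOn ℝ Set.univ Uinf)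
    (hmin : ∀ s, Uinf ξinf ≤ Uinf s)
    (huniq : ∀ s, s ≠ ξinf → Uinf ξinf < Uinf s)
    (hunif : ∀ k : ℝ, TendstoUniformlyOn U Uinf atTop {s | ‖s‖ ≤ k})
    (hξ : ∀ n s, U n (ξ n) ≤ U n s) :
    Tendsto ξ atTop (𝓝 ξinf) := by
  rcases Nat.eq_zero_or_pos p with rfl | hp
  · have : ξ = fun _ => ξinf := funext fun n => Subsingleton.elim _ _
    rw [this]
    exact tendsto_const_nhds
  haveI : Nontrivial (EuclideanSpace ℝ (Fin p)) :=
    nontrivial_of_ne (EuclideanSpace.single ⟨0, hp⟩ (1:ℝ)) 0 (by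
      intro h
      have := congrArg (fun v => v ⟨0, hp⟩) h
      simp [EuclideanSpace.single] at this)
  have hcont : Continuous Uinf := by
    have := hUinfconv.continuousOn isOpen_univ
    rwa [continuousOn_univ] at this
  rw [Metric.tendsto_atTop]
  intro ε hε
  set ε' : ℝ := ε / 2 with hε'
  have hε'pos : 0 < ε' := by positivity
  -- sphere of radius ε' around ξinf
  have hsph : (Metric.sphere ξinf ε').Nonempty :=
    NormedSpace.sphere_nonempty.2 hε'pos.le
  obtain ⟨s₀, hs₀mem, hs₀min⟩ :=
    (isCompact_sphere ξinf ε').exists_isMinOn hsph hcont.continuousOn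
  have hs₀ne : s₀ ≠ ξinf := by
    intro h
    rw [h, Metric.mem_sphere, dist_self] at hs₀mem
    exact hε'pos.ne hs₀mem
  set δ : ℝ := Uinf s₀ - Uinf ξinf with hδ
  have hδpos : 0 < δ := sub_pos.2 (huniq s₀ hs₀ne)
  set k : ℝ := ‖ξinf‖ + ε' with hk
  obtain ⟨N, hN⟩ := (Metric.tendstoUniformlyOn_iff.1 (hunif k)) (δ / 3)
    (by positivity) |>.exists_forall_of_atTop
  refine ⟨N, fun n hn => ?_⟩
  have hclose := hN n hn
  -- claim: dist (ξ n) ξinf ≤ ε'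
  have key : dist (ξ n) ξinf ≤ ε' := by
    by_contra hgt
    push_neg at hgt
    set r : ℝ := dist (ξ n) ξinf with hr
    have hrpos : 0 < r := lt_trans hε'pos hgt
    set t : ℝ := ε' / r with ht
    have ht0 : 0 < t := by positivity
    have ht1 : t < 1 := (div_lt_one hrpos).2 hgt
    set s : EuclideanSpace ℝ (Fin p) := (1 - t) • ξinf + t • ξ n with hs
    have hssph : dist s ξinf = ε' := by
      have : s - ξinf = t • (ξ n - ξinf) := by
        rw [hs]; module
      rw [dist_eq_norm, this, norm_smul, Real.norm_eq_abs, abs_of_pos ht0,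
        ← dist_eq_norm, ← hr, ht]
      field_simp
    -- norms within k
    have hξinf_in : ‖ξinf‖ ≤ k := by rw [hk]; linarith
    have hs_in : ‖s‖ ≤ k := by
      have h5 : ‖s‖ ≤ ‖ξinf‖ + ‖s - ξinf‖ := by
        simpa using norm_add_le ξinf (s - ξinf)
      rw [← dist_eq_norm, hssph] at h5
      rwa [hk]
    -- convexity
    have hconv := (hUconv n).2 (Set.mem_univ ξinf) (Set.mem_univ (ξ n))
      (by linarith : (0:ℝ) ≤ 1 - t) ht0.le (by ring)
    have hle : U n s ≤ U n ξinf := by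
      have h1 : U n (ξ n) ≤ U n ξinf := hξ n ξinf
      calc U n s ≤ (1 - t) * U n ξinf + t * U n (ξ n) := by
            simpa [hs] using hconv
        _ ≤ (1 - t) * U n ξinf + t * U n ξinf := by nlinarith
        _ = U n ξinf := by ring
    -- uniform closeness
    have h2 : dist (Uinf s) (U n s) < δ / 3 := hclose s hs_in
    have h3 : dist (Uinf ξinf) (U n ξinf) < δ / 3 := hclose ξinf hξinf_in
    have h4 : Uinf s₀ ≤ Uinf s := hs₀min (Metric.mem_sphere.2 hssph)
    rw [Real.dist_eq] at h2 h3
    have h2' := abs_lt.1 h2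
    have h3' := abs_lt.1 h3
    have : U n ξinf < U n s := by
      have : Uinf ξinf + δ ≤ Uinf s := by rw [hδ] at *; linarith
      linarith [h2'.1, h2'.2, h3'.1, h3'.2]
    linarith
  calc dist (ξ n) ξinf ≤ ε' := key
    _ < ε := by rw [hε']; linarith
end

section
/- Let β ∈ ℝ^p with support {j : β_j ≠ 0} = {1,…,p₀}, λ_n/√n → λ₀ ∈ [0,∞), and let (T_n) ⊂ ℝ^p be a convergent sequence with limit T having coordinates T_j. Set β̂_{n,j} = β_j + T_{n,j}/√n (so β̂_{n,j} → β_j). Then for each j ≤ p₀ with β_j ≠ 0, λ_n(|β̂_{n,j} + u_j/√n| − |β̂_{n,j}|) → λ₀ u_j sign(β_j); and for each j > p₀ (β_j = 0), λ_n(|β̂_{n,j} + u_j/√n| − |β̂_{n,j}|) = λ_n n^{-1/2}(|T_{n,j} + u_j| − |T_{n,j}|) → λ₀(|T_j + u_j| − |T_j|), which equals λ₀[ sign(T_j)u_j − 2 sign(T_j)(u_j + T_j) 1{sign(T_j)(u_j+T_j) < 0} ] if T_j ≠ 0 and λ₀|u_j| if T_j = 0. -/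
open Filter Topology

/-- behaviour of the bootstrap penalty term with `β̂_{n,j} = β_j + T_{n,j}/√n`
and `T_n → T`.  On the support (`j < p₀`, `β_j ≠ 0`) the term converges to
`λ₀ u_j sign(β_j)`; off the support it equals `λ_n n^{-1/2}(|T_{n,j}+u_j| − |T_{n,j}|)`
and converges to `λ₀(|T_j+u_j| − |T_j|)`, which equals
`λ₀[sign(T_j)u_j − 2 sign(T_j)(u_j+T_j) 1{sign(T_j)(u_j+T_j)<0}]` if `T_j ≠ 0`
and `λ₀|u_j|` if `T_j = 0`. -/
theorem stmt19 (p p₀ : ℕ) (β : Fin p → ℝ)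
    (hsupp : ∀ j : Fin p, β j ≠ 0 ↔ (j : ℕ) < p₀)
    (lam : ℕ → ℝ) (hlam : ∀ n, 0 ≤ lam n) (lam0 : ℝ) (hlam0 : 0 ≤ lam0)
    (hlimit : Tendsto (fun n => lam n / Real.sqrt n) atTop (𝓝 lam0))
    (Tn : ℕ → Fin p → ℝ) (T : Fin p → ℝ)
    (hT : ∀ j, Tendsto (fun n => Tn n j) atTop (𝓝 (T j)))
    (u : Fin p → ℝ) :
    (∀ j : Fin p, (j : ℕ) < p₀ →
      Tendsto (fun n : ℕ => lam n * (|β j + Tn n j / Real.sqrt n + u j / Real.sqrt n|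
          - |β j + Tn n j / Real.sqrt n|)) atTop
        (𝓝 (lam0 * u j * Real.sign (β j)))) ∧
    (∀ j : Fin p, p₀ ≤ (j : ℕ) →
      (∀ n : ℕ, 1 ≤ n →
        lam n * (|β j + Tn n j / Real.sqrt n + u j / Real.sqrt n|
            - |β j + Tn n j / Real.sqrt n|)
          = lam n * (Real.sqrt n)⁻¹ * (|Tn n j + u j| - |Tn n j|)) ∧
      Tendsto (fun n : ℕ => lam n * (|β j + Tn n j / Real.sqrt n + u j / Real.sqrt n|
          - |β j + Tn n j / Real.sqrt n|)) atTop
        (𝓝 (lam0 * (|T j + u j| - |T j|))) ∧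
      (T j ≠ 0 → lam0 * (|T j + u j| - |T j|)
          = lam0 * (Real.sign (T j) * u j
            - 2 * Real.sign (T j) * (u j + T j)
              * (if Real.sign (T j) * (u j + T j) < 0 then 1 else 0))) ∧
      (T j = 0 → lam0 * (|T j + u j| - |T j|) = lam0 * |u j|)) := by
  have hsqrt : Tendsto (fun n : ℕ => Real.sqrt n) atTop atTop := by
    apply tendsto_atTop_atTop_of_monotone
    · intro a b hab
      exact Real.sqrt_le_sqrt (by exact_mod_cast hab)
    · intro b
      refine ⟨⌈b ^ 2⌉₊, ?_⟩
      calc b ≤ |b| := le_abs_self b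
        _ = Real.sqrt (b ^ 2) := (Real.sqrt_sq_eq_abs b).symm
        _ ≤ Real.sqrt (⌈b ^ 2⌉₊ : ℕ) := Real.sqrt_le_sqrt (by exact_mod_cast Nat.le_ceil _)
  have hinv : Tendsto (fun n : ℕ => (Real.sqrt n)⁻¹) atTop (𝓝 0) :=
    tendsto_inv_atTop_zero.comp hsqrt
  constructor
  · intro j hj
    have hβ : β j ≠ 0 := (hsupp j).mpr hj
    have hTdiv : Tendsto (fun n : ℕ => Tn n j / Real.sqrt n) atTop (𝓝 0) := by
      simpa [div_eq_mul_inv] using (hT j).mul hinv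
    have hudiv : Tendsto (fun n : ℕ => u j / Real.sqrt n) atTop (𝓝 0) := by
      simpa [div_eq_mul_inv] using (tendsto_const_nhds (x := u j)).mul hinv
    have ha : Tendsto (fun n : ℕ => β j + Tn n j / Real.sqrt n) atTop (𝓝 (β j)) := by
      simpa using (tendsto_const_nhds (x := β j)).add hTdiv
    have hb : Tendsto (fun n : ℕ => β j + Tn n j / Real.sqrt n + u j / Real.sqrt n)
        atTop (𝓝 (β j)) := by
      simpa using ha.add hudiv
    have hmain : Tendsto (fun n : ℕ => lam n / Real.sqrt n * (u j * Real.sign (β j)))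
        atTop (𝓝 (lam0 * u j * Real.sign (β j))) := by
      simpa [mul_assoc] using hlimit.mul_const (u j * Real.sign (β j))
    refine hmain.congr' ?_
    rcases hβ.lt_or_gt with hneg | hpos
    · have hs : Real.sign (β j) = -1 := Real.sign_of_neg hneg
      filter_upwards [ha.eventually (eventually_lt_nhds hneg),
        hb.eventually (eventually_lt_nhds hneg)] with n h1 h2
      rw [hs, abs_of_neg h2, abs_of_neg h1]
      ring
    · have hs : Real.sign (β j) = 1 := Real.sign_of_pos hpos
      filter_upwards [ha.eventually (eventually_gt_nhds hpos),
        hb.eventually (eventually_gt_nhds hpos)] with n h1 h2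
      rw [hs, abs_of_pos h2, abs_of_pos h1]
      ring
  · intro j hj
    have hβ : β j = 0 := by
      by_contra h
      exact absurd ((hsupp j).mp h) (not_lt.mpr hj)
    have heq : ∀ n : ℕ, 1 ≤ n →
        lam n * (|β j + Tn n j / Real.sqrt n + u j / Real.sqrt n|
            - |β j + Tn n j / Real.sqrt n|)
          = lam n * (Real.sqrt n)⁻¹ * (|Tn n j + u j| - |Tn n j|) := by
      intro n hn
      have hs : (0:ℝ) < Real.sqrt n :=
        Real.sqrt_pos.mpr (by exact_mod_cast Nat.pos_of_ne_zero (by omega))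
      rw [hβ, zero_add, ← add_div, abs_div, abs_div, abs_of_pos hs]
      ring
    refine ⟨heq, ?_, ?_, ?_⟩
    · have habs : Tendsto (fun n : ℕ => |Tn n j + u j| - |Tn n j|) atTop
          (𝓝 (|T j + u j| - |T j|)) :=
        (((hT j).add tendsto_const_nhds).abs).sub (hT j).abs
      have hmain : Tendsto (fun n : ℕ => lam n / Real.sqrt n * (|Tn n j + u j| - |Tn n j|))
          atTop (𝓝 (lam0 * (|T j + u j| - |T j|))) := hlimit.mul habs
      refine hmain.congr' ?_
      filter_upwards [eventually_ge_atTop 1] with n hn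
      rw [heq n hn, div_eq_mul_inv]
    · intro hTj
      rcases hTj.lt_or_gt with h | h
      · rw [Real.sign_of_neg h, abs_of_neg h]
        by_cases h' : (-1:ℝ) * (u j + T j) < 0
        · rw [if_pos h', abs_of_pos (by linarith)]
          ring
        · rw [if_neg h', abs_of_nonpos (by linarith [not_lt.mp h'])]
          ring
      · rw [Real.sign_of_pos h, abs_of_pos h]
        by_cases h' : (1:ℝ) * (u j + T j) < 0
        · rw [if_pos h', abs_of_neg (by linarith)]
          ring
        · rw [if_neg h', abs_of_nonneg (by linarith [not_lt.mp h'])]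
          ring
    · intro hTj
      rw [hTj, zero_add, abs_zero, sub_zero]
end
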